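/- In the cohomology algebra H^*(m_0), the class [e^1] annihilates every class of the form ω(ξ ∧ e^i ∧ e^{i+1}): the product [e^1] ∧ [ω(ξ ∧ e^i ∧ e^{i+1})] = 0. -/

import Mathlib

variable (K : Type*) [Field K] [CharZero K]

/-- The cochain `e^i` (`i ≥ 1`) dual to the basis vector `e_i` of the Lie algebra `m₀`. -/
noncomputable def e (i : ℕ) : ExteriorAlgebra K (ℕ →₀ K) :=
  ExteriorAlgebra.ι K (Finsupp.single (i - 1) (1 : K))

/-- The monomial cochain `e^{i_1} ∧ ... ∧ e^{i_q}`. -/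
noncomputable def mono (s : Finset ℕ) : ExteriorAlgebra K (ℕ →₀ K) :=
  ((s.sort (· ≤ ·)).map (e K)).prod

/-- `C^q`: the span of the `q`-cochains `e^{i_1} ∧ ... ∧ e^{i_q}`. -/
noncomputable def LamDeg (q : ℕ) : Submodule K (ExteriorAlgebra K (ℕ →₀ K)) :=
  Submodule.span K {x | ∃ s : Finset ℕ,
    s.card = q ∧ (∀ i ∈ s, 1 ≤ i) ∧ x = mono K s}

/-! ### Auxiliary machinery -/

lemma e_sq (a : ℕ) : e K a * e K a = 0 := ExteriorAlgebra.ι_sq_zero _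

lemma e_anticomm (a b : ℕ) : e K a * e K b = -(e K b * e K a) := by
  have h : ExteriorAlgebra.ι K (Finsupp.single (a - 1) (1 : K) + Finsupp.single (b - 1) (1 : K)) *
      ExteriorAlgebra.ι K (Finsupp.single (a - 1) (1 : K) + Finsupp.single (b - 1) (1 : K)) = 0 :=
    ExteriorAlgebra.ι_sq_zero _
  rw [map_add, add_mul, mul_add, mul_add, ExteriorAlgebra.ι_sq_zero,
    ExteriorAlgebra.ι_sq_zero, zero_add, add_zero] at h
  exact eq_neg_of_add_eq_zero_left h

/-- The product of the cochains `e^j` over a list of indices. -/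
noncomputable def eprod (l : List ℕ) : ExteriorAlgebra K (ℕ →₀ K) := (l.map (e K)).prod

lemma eprod_nil : eprod K [] = 1 := rfl

lemma eprod_cons (a : ℕ) (l : List ℕ) : eprod K (a :: l) = e K a * eprod K l := by
  simp [eprod]

lemma eprod_append_singleton (l : List ℕ) (m : ℕ) : eprod K (l ++ [m]) = eprod K l * e K m := by
  simp [eprod]

/-- The span of all products of cochains `e^j`, `j ≥ 1`. -/
noncomputable def NN : Submodule K (ExteriorAlgebra K (ℕ →₀ K)) :=
  Submodule.span K {x | ∃ l : List ℕ, (∀ j ∈ l, 1 ≤ j) ∧ x = eprod K l}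

lemma eprod_mem {l : List ℕ} (h : ∀ j ∈ l, 1 ≤ j) : eprod K l ∈ NN K :=
  Submodule.subset_span ⟨l, h, rfl⟩

lemma mul_e_left_mem {a : ℕ} (ha : 1 ≤ a) {x : ExteriorAlgebra K (ℕ →₀ K)}
    (hx : x ∈ NN K) : e K a * x ∈ NN K := by
  unfold NN at hx
  induction hx using Submodule.span_induction with
  | mem x hx =>
    obtain ⟨l, hl, rfl⟩ := hx
    rw [← eprod_cons]
    exact eprod_mem K (by
      intro j hj
      rcases List.mem_cons.mp hj with h | h
      · omega
      · exact hl j h)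
  | zero => simp
  | add x y _ _ hx hy => rw [mul_add]; exact add_mem hx hy
  | smul c x _ hx => rw [mul_smul_comm]; exact Submodule.smul_mem _ _ hx

lemma mul_e_right_mem {m : ℕ} (hm : 1 ≤ m) {x : ExteriorAlgebra K (ℕ →₀ K)}
    (hx : x ∈ NN K) : x * e K m ∈ NN K := by
  unfold NN at hx
  induction hx using Submodule.span_induction with
  | mem x hx =>
    obtain ⟨l, hl, rfl⟩ := hx
    rw [← eprod_append_singleton]
    exact eprod_mem K (by
      intro j hj
      rcases List.mem_append.mp hj with h | h
      · exact hl j h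
      · simp at h; omega)
  | zero => simp
  | add x y _ _ hx hy => rw [add_mul]; exact add_mem hx hy
  | smul c x _ hx => rw [smul_mul_assoc]; exact Submodule.smul_mem _ _ hx

lemma one_mem_LamDeg_zero : (1 : ExteriorAlgebra K (ℕ →₀ K)) ∈ LamDeg K 0 :=
  Submodule.subset_span ⟨∅, by simp [mono]⟩

lemma e_mem_LamDeg_one {a : ℕ} (ha : 1 ≤ a) : e K a ∈ LamDeg K 1 :=
  Submodule.subset_span ⟨{a}, by simp [mono, ha]⟩

section Derivations

variable {K}
variable (d D : Module.End K (ExteriorAlgebra K (ℕ →₀ K)))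

lemma D_one (hDLeib : ∀ x y, D (x * y) = D x * y + x * D y) : D 1 = 0 := by
  have h := hDLeib 1 1
  simp only [mul_one, one_mul] at h
  have h2 : D 1 + D 1 = D 1 + 0 := by rw [add_zero]; exact h.symm
  exact add_left_cancel h2

lemma d_one (hdLeib : ∀ p : ℕ, ∀ x ∈ LamDeg K p, ∀ y,
    d (x * y) = d x * y + ((-1 : K) ^ p) • (x * d y)) : d 1 = 0 := by
  have h := hdLeib 0 1 (one_mem_LamDeg_zero K) 1
  simp only [mul_one, one_mul, pow_zero, one_smul] at h
  have h2 : d 1 + d 1 = d 1 + 0 := by rw [add_zero]; exact h.symm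
  exact add_left_cancel h2

lemma d_e (hd1 : d (e K 1) = 0) (hd2 : d (e K 2) = 0)
    (hd : ∀ i, 2 ≤ i → d (e K (i + 1)) = e K 1 * e K i)
    (hD1 : D (e K 1) = 0) (hD2 : D (e K 2) = 0)
    (hDj : ∀ j, 3 ≤ j → D (e K j) = e K (j - 1)) :
    ∀ a, 1 ≤ a → d (e K a) = e K 1 * D (e K a) := by
  intro a ha
  rcases Nat.lt_or_ge a 3 with h3 | h3
  · interval_cases a
    · rw [hd1, hD1, mul_zero]
    · rw [hd2, hD2, mul_zero]
  · have h1 : d (e K a) = e K 1 * e K (a - 1) := by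
      have := hd (a - 1) (by omega)
      rwa [show a - 1 + 1 = a from by omega] at this
    rw [h1, hDj a h3]

lemma D_eprod_mem (hDLeib : ∀ x y, D (x * y) = D x * y + x * D y)
    (hD1 : D (e K 1) = 0) (hD2 : D (e K 2) = 0)
    (hDj : ∀ j, 3 ≤ j → D (e K j) = e K (j - 1)) :
    ∀ l : List ℕ, (∀ j ∈ l, 1 ≤ j) → D (eprod K l) ∈ NN K := by
  intro l
  induction l with
  | nil => intro _; rw [eprod_nil, D_one D hDLeib]; exact Submodule.zero_mem _
  | cons a l ih =>
    intro hl
    have ha : 1 ≤ a := hl a (List.mem_cons_self)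
    have hl' : ∀ j ∈ l, 1 ≤ j := fun j hj => hl j (List.mem_cons_of_mem a hj)
    rw [eprod_cons, hDLeib]
    refine add_mem ?_ (mul_e_left_mem K ha (ih hl'))
    rcases Nat.lt_or_ge a 3 with h3 | h3
    · interval_cases a
      · rw [hD1, zero_mul]; exact Submodule.zero_mem _
      · rw [hD2, zero_mul]; exact Submodule.zero_mem _
    · rw [hDj a h3, ← eprod_cons]
      exact eprod_mem K (by
        intro j hj
        rcases List.mem_cons.mp hj with h | h
        · omega
        · exact hl' j h)

lemma D_mem (hDLeib : ∀ x y, D (x * y) = D x * y + x * D y)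
    (hD1 : D (e K 1) = 0) (hD2 : D (e K 2) = 0)
    (hDj : ∀ j, 3 ≤ j → D (e K j) = e K (j - 1)) :
    ∀ x ∈ NN K, D x ∈ NN K := by
  intro x hx
  unfold NN at hx
  induction hx using Submodule.span_induction with
  | mem x hx =>
    obtain ⟨l, hl, rfl⟩ := hx
    exact D_eprod_mem D hDLeib hD1 hD2 hDj l hl
  | zero => rw [map_zero]; exact Submodule.zero_mem _
  | add x y _ _ hx hy => rw [map_add]; exact add_mem hx hy
  | smul c x _ hx => rw [map_smul]; exact Submodule.smul_mem _ _ hx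

lemma d_eq_e1_D
    (hdLeib : ∀ p : ℕ, ∀ x ∈ LamDeg K p, ∀ y,
      d (x * y) = d x * y + ((-1 : K) ^ p) • (x * d y))
    (hd1 : d (e K 1) = 0) (hd2 : d (e K 2) = 0)
    (hd : ∀ i, 2 ≤ i → d (e K (i + 1)) = e K 1 * e K i)
    (hDLeib : ∀ x y, D (x * y) = D x * y + x * D y)
    (hD1 : D (e K 1) = 0) (hD2 : D (e K 2) = 0)
    (hDj : ∀ j, 3 ≤ j → D (e K j) = e K (j - 1)) :
    ∀ x ∈ NN K, d x = e K 1 * D x := by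
  have heprod : ∀ l : List ℕ, (∀ j ∈ l, 1 ≤ j) → d (eprod K l) = e K 1 * D (eprod K l) := by
    intro l
    induction l with
    | nil =>
      intro _
      rw [eprod_nil, d_one d hdLeib, D_one D hDLeib, mul_zero]
    | cons a l ih =>
      intro hl
      have ha : 1 ≤ a := hl a (List.mem_cons_self)
      have hl' : ∀ j ∈ l, 1 ≤ j := fun j hj => hl j (List.mem_cons_of_mem a hj)
      rw [eprod_cons, hdLeib 1 (e K a) (e_mem_LamDeg_one K ha) (eprod K l),
        d_e d D hd1 hd2 hd hD1 hD2 hDj a ha, ih hl', hDLeib, mul_add]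
      have hswap : e K a * (e K 1 * D (eprod K l)) = -(e K 1 * (e K a * D (eprod K l))) := by
        rw [← mul_assoc, e_anticomm K a 1, neg_mul, mul_assoc]
      rw [hswap, pow_one, ← mul_assoc]
      simp [mul_assoc]
  intro x hx
  unfold NN at hx
  induction hx using Submodule.span_induction with
  | mem x hx => obtain ⟨l, hl, rfl⟩ := hx; exact heprod l hl
  | zero => rw [map_zero, map_zero, mul_zero]
  | add x y _ _ hx hy => rw [map_add, map_add, hx, hy, mul_add]
  | smul c x _ hx => rw [map_smul, map_smul, hx, mul_smul_comm]

end Derivations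

/-- In `H^*(m₀)` the class `[e^1]` annihilates every class
`[ω(ξ ∧ e^i ∧ e^{i+1})]`, where
`ω(ξ ∧ e^i ∧ e^{i+1}) = Σ_{l ≥ 0} (-1)^l (ad e₁^*)^l (ξ ∧ e^i) ∧ e^{i+1+l}`:
the product `e^1 ∧ ω(ξ ∧ e^i ∧ e^{i+1})` is a coboundary of the Chevalley–Eilenberg
differential `d` of `m₀`.  Here `D = ad e₁^*` is the even derivation with
`D e^1 = D e^2 = 0`, `D e^j = e^{j-1}` for `j ≥ 3`, and `d` is the odd derivation with
`d e^1 = d e^2 = 0`, `d e^{i+1} = e^1 ∧ e^i` for `i ≥ 2`. -/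
theorem stmt8 (d D : Module.End K (ExteriorAlgebra K (ℕ →₀ K)))
    (hdLeib : ∀ p : ℕ, ∀ x ∈ LamDeg K p, ∀ y,
      d (x * y) = d x * y + ((-1 : K) ^ p) • (x * d y))
    (hd1 : d (e K 1) = 0) (hd2 : d (e K 2) = 0)
    (hd : ∀ i, 2 ≤ i → d (e K (i + 1)) = e K 1 * e K i)
    (hDLeib : ∀ x y, D (x * y) = D x * y + x * D y)
    (hD1 : D (e K 1) = 0) (hD2 : D (e K 2) = 0)
    (hDj : ∀ j, 3 ≤ j → D (e K j) = e K (j - 1))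
    (i : ℕ) (hi : 2 ≤ i) (s : Finset ℕ)
    (hs : ∀ j ∈ s, 2 ≤ j ∧ j < i)
    (L : ℕ) (hL : ∀ l, L ≤ l → (D ^ l) (mono K s * e K i) = 0) :
    ∃ c, d c =
      e K 1 * ∑ l ∈ Finset.range L,
        ((-1 : K) ^ l) • ((D ^ l) (mono K s * e K i) * e K (i + 1 + l)) := by
  set y : ExteriorAlgebra K (ℕ →₀ K) := mono K s * e K i with hy
  have hyN : y ∈ NN K := by
    have h1 : y = eprod K (s.sort (· ≤ ·) ++ [i]) := by
      rw [eprod_append_singleton]; rfl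
    rw [h1]
    refine eprod_mem K ?_
    intro j hj
    rcases List.mem_append.mp hj with h | h
    · have hj' : j ∈ s := (Finset.mem_sort _).mp h
      have := (hs j hj').1
      omega
    · simp at h; omega
  have hxN : ∀ l : ℕ, (D ^ l) y ∈ NN K := by
    intro l
    induction l with
    | zero => rw [pow_zero, Module.End.one_apply]; exact hyN
    | succ n ih =>
      rw [pow_succ', Module.End.mul_apply]
      exact D_mem D hDLeib hD1 hD2 hDj _ ih
  have hstep : ∀ l : ℕ, d ((D ^ l) y * e K (i + 2 + l)) =
      e K 1 * ((D ^ (l + 1)) y * e K (i + 2 + l)) +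
        e K 1 * ((D ^ l) y * e K (i + 1 + l)) := by
    intro l
    have hmem : (D ^ l) y * e K (i + 2 + l) ∈ NN K :=
      mul_e_right_mem K (by omega) (hxN l)
    rw [d_eq_e1_D d D hdLeib hd1 hd2 hd hDLeib hD1 hD2 hDj _ hmem, hDLeib]
    have hDe : D (e K (i + 2 + l)) = e K (i + 1 + l) := by
      rw [hDj _ (by omega)]
      congr 1
      omega
    rw [hDe, mul_add]
    congr 2
    rw [pow_succ', Module.End.mul_apply]
  have key : ∀ L' : ℕ,
      d (∑ l ∈ Finset.range L', ((-1 : K) ^ l * ((l : K) + 1)) • ((D ^ l) y * e K (i + 2 + l))) =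
        e K 1 * ∑ l ∈ Finset.range L', ((-1 : K) ^ l) • ((D ^ l) y * e K (i + 1 + l)) -
          ((-1 : K) ^ L' * (L' : K)) • (e K 1 * ((D ^ L') y * e K (i + 1 + L'))) := by
    intro L'
    induction L' with
    | zero => simp
    | succ n ih =>
      rw [Finset.sum_range_succ, map_add, ih, map_smul, hstep n,
        Finset.sum_range_succ, mul_add]
      have hidx : i + 1 + (n + 1) = i + 2 + n := by omega
      rw [hidx]
      simp only [mul_add, mul_smul_comm, smul_add]
      push_cast
      module
  refine ⟨∑ l ∈ Finset.range L, ((-1 : K) ^ l * ((l : K) + 1)) • ((D ^ l) y * e K (i + 2 + l)), ?_⟩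
  rw [key L, hL L le_rfl]
  simp
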